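/- Let p ∈ (1,2], p' := p/(p−1) and δ ∈ [0,∞), and set ω := ω_{p,δ}. Then there exists a constant C depending only on p such that the complementary function satisfies ω*(t) ≤ C·(δ^p + t^{p'}) for all t ≥ 0. -/

import Mathlib

open Real Set MeasureTheory Filter Matrix

noncomputable section

/-- The N-function `omega_{p,delta}(t) = int_0^t (delta+s)^(p-2) s ds`. -/
def omg (p δ : ℝ) (t : ℝ) : ℝ := ∫ s in (0:ℝ)..t, (δ + s) ^ (p - 2) * s

/-- The `A`-approximation of a function `φ`: it equals `φ` on `[0,A]` and is the
second-order Taylor polynomial of `φ` at `A` for `t > A`. -/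
def approxA (φ : ℝ → ℝ) (A : ℝ) (t : ℝ) : ℝ :=
  if t ≤ A then φ t
  else (1/2) * deriv (deriv φ) A * t ^ 2 + (deriv φ A - deriv (deriv φ) A * A) * t
    + (φ A - deriv φ A * A + (1/2) * deriv (deriv φ) A * A ^ 2)

/-- `φ` is a regular N-function: continuous, convex, positive for `t > 0`,
`φ(t)/t → 0` as `t → 0⁺`, `φ(t)/t → ∞` as `t → ∞`, `C¹` on `[0,∞)`, `C²` on `(0,∞)`,
with `φ'' > 0` on `(0,∞)`. -/
structure IsRegularNFunction (φ : ℝ → ℝ) : Prop where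
  continuousOn : ContinuousOn φ (Set.Ici 0)
  convexOn : ConvexOn ℝ (Set.Ici 0) φ
  pos : ∀ t : ℝ, 0 < t → 0 < φ t
  tendsto_zero : Filter.Tendsto (fun t => φ t / t) (nhdsWithin 0 (Set.Ioi 0)) (nhds 0)
  tendsto_atTop : Filter.Tendsto (fun t => φ t / t) Filter.atTop Filter.atTop
  diffAt : ∀ t : ℝ, 0 < t → DifferentiableAt ℝ φ t
  deriv_continuousOn : ContinuousOn (deriv φ) (Set.Ici 0)
  diffAt2 : ∀ t : ℝ, 0 < t → DifferentiableAt ℝ (deriv φ) t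
  deriv2_continuousOn : ContinuousOn (deriv (deriv φ)) (Set.Ioi 0)
  deriv2_pos : ∀ t : ℝ, 0 < t → 0 < deriv (deriv φ) t

/-- `φ` is a balanced N-function with characteristics `(γ₁, γ₂)`:
`γ₁ φ'(t) ≤ t φ''(t) ≤ γ₂ φ'(t)` for all `t > 0`. -/
structure IsBalanced (φ : ℝ → ℝ) (γ₁ γ₂ : ℝ) : Prop where
  regular : IsRegularNFunction φ
  gamma1_mem : γ₁ ∈ Set.Ioc (0:ℝ) 1
  gamma2_ge : 1 ≤ γ₂
  lower : ∀ t : ℝ, 0 < t → γ₁ * deriv φ t ≤ t * deriv (deriv φ) t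
  upper : ∀ t : ℝ, 0 < t → t * deriv (deriv φ) t ≤ γ₂ * deriv φ t

/-- `ψ` satisfies the Δ₂-condition with constant `K`. -/
def SatisfiesDelta2 (ψ : ℝ → ℝ) (K : ℝ) : Prop :=
  2 ≤ K ∧ ∀ t : ℝ, 0 ≤ t → ψ (2 * t) ≤ K * ψ t

/-- The complementary N-function `φ*(t) = ∫₀ᵗ (φ')⁻¹(s) ds`, where `(φ')⁻¹` is the
inverse on `[0,∞)` of the (strictly increasing) derivative `φ'`. -/
def conj (φ : ℝ → ℝ) (t : ℝ) : ℝ :=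
  ∫ s in (0:ℝ)..t, Function.invFunOn (deriv φ) (Set.Ici 0) s

private lemma omg_cont (p δ : ℝ) (hp1 : 1 < p) (hδ : 0 ≤ δ) :
    ContinuousOn (fun s : ℝ => (δ + s) ^ (p - 2) * s) (Set.Ici 0) := by
  intro x hx
  rcases lt_or_eq_of_le (by simp at hx; positivity : (0:ℝ) ≤ δ + x) with h | h
  · exact (((continuousAt_const.add continuousAt_id).rpow_const
      (Or.inl (ne_of_gt h))).mul continuousAt_id).continuousWithinAt
  · have hx0 : (0:ℝ) ≤ x := hx
    have hδ0 : δ = 0 := by linarith [hx0, (by linarith : δ + x = 0)]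
    have hxx : x = 0 := by linarith
    subst hδ0 hxx
    have hcg : ContinuousWithinAt (fun s : ℝ => s ^ (p - 1)) (Set.Ici 0) 0 :=
      (Real.continuousAt_rpow_const 0 (p - 1) (Or.inr (by linarith))).continuousWithinAt
    apply hcg.congr
    · intro y hy
      have hy0 : (0:ℝ) ≤ y := hy
      rcases eq_or_lt_of_le hy0 with hy' | hy'
      · rw [← hy', Real.zero_rpow (by linarith : p - 1 ≠ 0)]
        ring
      · rw [zero_add, ← Real.rpow_add_one (ne_of_gt hy') (p - 2)]
        have e : p - 2 + 1 = p - 1 := by ring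
        rw [e]
    · rw [zero_add, Real.zero_rpow (by linarith : p - 1 ≠ 0)]
      ring

private lemma omg_deriv (p δ : ℝ) (hp1 : 1 < p) (hδ : 0 ≤ δ) {x : ℝ} (hx : 0 < x) :
    deriv (omg p δ) x = (δ + x) ^ (p - 2) * x := by
  have hcont := omg_cont p δ hp1 hδ
  have hint : IntervalIntegrable (fun s : ℝ => (δ + s) ^ (p - 2) * s) volume 0 x :=
    (hcont.mono (by rw [Set.uIcc_of_le hx.le]; exact Set.Icc_subset_Ici_self)).intervalIntegrable
  have hca : ∀ y ∈ Set.Ioi (0:ℝ), ContinuousAt (fun s : ℝ => (δ + s) ^ (p - 2) * s) y := by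
    intro y hy
    have hy' : (0:ℝ) < y := hy
    exact ((continuousAt_const.add continuousAt_id).rpow_const
      (Or.inl (ne_of_gt (show (0:ℝ) < δ + y by linarith)))).mul continuousAt_id
  have hmeas : StronglyMeasurableAtFilter (fun s : ℝ => (δ + s) ^ (p - 2) * s) (nhds x) volume :=
    ContinuousAt.stronglyMeasurableAtFilter isOpen_Ioi hca x hx
  have hD : HasDerivAt (omg p δ) ((δ + x) ^ (p - 2) * x) x :=
    intervalIntegral.integral_hasDerivAt_right hint hmeas (hca x hx)
  exact hD.deriv

private lemma two_rpow_ge (p : ℝ) (hp1 : 1 < p) : (2:ℝ)⁻¹ ≤ (2:ℝ) ^ (p - 2) := by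
  have h : (2:ℝ) ^ (-1:ℝ) ≤ (2:ℝ) ^ (p - 2) :=
    Real.rpow_le_rpow_of_exponent_le one_le_two (by linarith)
  rwa [Real.rpow_neg_one] at h

private lemma omg_surj (p δ : ℝ) (hp1 : 1 < p) (hp2 : p ≤ 2) (hδ : 0 ≤ δ) {s : ℝ} (hs : 0 < s) :
    ∃ x ∈ Set.Ici (0:ℝ), deriv (omg p δ) x = s := by
  rcases eq_or_lt_of_le hδ with hδ0 | hδ0
  · refine ⟨s ^ (p - 1)⁻¹, le_of_lt (by positivity : (0:ℝ) < s ^ (p - 1)⁻¹), ?_⟩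
    rw [omg_deriv p δ hp1 hδ (by positivity), ← hδ0, zero_add,
      ← Real.rpow_add_one (ne_of_gt (by positivity : (0:ℝ) < s ^ (p-1)⁻¹)) (p - 2)]
    have e : p - 2 + 1 = p - 1 := by ring
    rw [e, Real.rpow_inv_rpow hs.le (by linarith : p - 1 ≠ 0)]
  · set a := s * δ ^ (2 - p) with ha
    have hapos : 0 < a := by positivity
    set M := max a (max δ ((2 * s) ^ (p - 1)⁻¹)) with hM
    have haM : a ≤ M := le_max_left _ _
    have hMpos : 0 < M := lt_of_lt_of_le hapos haM
    have hMδ : δ ≤ M := le_trans (le_max_left _ _) (le_max_right a _)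
    have hM2s : (2 * s) ^ (p - 1)⁻¹ ≤ M := le_trans (le_max_right δ _) (le_max_right a _)
    have hWa : (δ + a) ^ (p - 2) * a ≤ s := by
      have h1 : (δ + a) ^ (p - 2) ≤ δ ^ (p - 2) :=
        Real.rpow_le_rpow_of_nonpos hδ0 (by linarith) (by linarith)
      have h2 : (δ + a) ^ (p - 2) * a ≤ δ ^ (p - 2) * a :=
        mul_le_mul_of_nonneg_right h1 hapos.le
      have h3 : δ ^ (p - 2) * a = s * (δ ^ (p - 2) * δ ^ (2 - p)) := by rw [ha]; ring
      have h4 : δ ^ (p - 2) * δ ^ (2 - p) = 1 := by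
        rw [← Real.rpow_add hδ0]
        norm_num
      rw [h3, h4, mul_one] at h2
      exact h2
    have hWM : s ≤ (δ + M) ^ (p - 2) * M := by
      have h1 : (2 * M) ^ (p - 2) ≤ (δ + M) ^ (p - 2) :=
        Real.rpow_le_rpow_of_nonpos (by linarith) (by linarith) (by linarith)
      have h2 : (2 * M : ℝ) ^ (p - 2) = 2 ^ (p - 2) * M ^ (p - 2) :=
        Real.mul_rpow (by norm_num) hMpos.le
      have h4 : 2 * s ≤ M ^ (p - 1) := by
        have h := Real.rpow_le_rpow (Real.rpow_nonneg (by positivity) _) hM2s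
          (by linarith : (0:ℝ) ≤ p - 1)
        rwa [Real.rpow_inv_rpow (by positivity) (by linarith : p - 1 ≠ 0)] at h
      have h5 : M ^ (p - 2) * M = M ^ (p - 1) := by
        rw [← Real.rpow_add_one hMpos.ne' (p - 2)]
        have e : p - 2 + 1 = p - 1 := by ring
        rw [e]
      have h6 : (2:ℝ) ^ (p - 2) * M ^ (p - 1) ≤ (δ + M) ^ (p - 2) * M := by
        calc (2:ℝ) ^ (p - 2) * M ^ (p - 1) = (2 * M) ^ (p - 2) * M := by rw [h2, ← h5]; ring
          _ ≤ (δ + M) ^ (p - 2) * M := mul_le_mul_of_nonneg_right h1 hMpos.le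
      have h7 := mul_le_mul (two_rpow_ge p hp1) h4 (by positivity)
        (Real.rpow_nonneg (by norm_num) _)
      calc s = (2:ℝ)⁻¹ * (2 * s) := by ring
        _ ≤ (2:ℝ) ^ (p - 2) * M ^ (p - 1) := h7
        _ ≤ (δ + M) ^ (p - 2) * M := h6
    have hWc : ContinuousOn (fun x : ℝ => (δ + x) ^ (p - 2) * x) (Set.Icc a M) := by
      intro x hx
      have : (0:ℝ) < δ + x := by have := hx.1; linarith
      exact (((continuousAt_const.add continuousAt_id).rpow_const
        (Or.inl (ne_of_gt this))).mul continuousAt_id).continuousWithinAt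
    obtain ⟨x, hx, hxs⟩ := intermediate_value_Icc haM hWc ⟨hWa, hWM⟩
    have hxpos : 0 < x := lt_of_lt_of_le hapos hx.1
    exact ⟨x, hxpos.le, by rw [omg_deriv p δ hp1 hδ hxpos]; exact hxs⟩

private lemma omg_inv_bound (p δ : ℝ) (hp1 : 1 < p) (hp2 : p ≤ 2) (hδ : 0 ≤ δ)
    {s x : ℝ} (hs : 0 ≤ s) (hx : 0 ≤ x) (hW : deriv (omg p δ) x = s) :
    x ≤ δ + 2 ^ (p - 1)⁻¹ * s ^ (p - 1)⁻¹ := by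
  rcases le_or_gt x δ with h | h
  · have : (0:ℝ) ≤ 2 ^ (p - 1)⁻¹ * s ^ (p - 1)⁻¹ := by positivity
    linarith
  · have hxpos : 0 < x := lt_of_le_of_lt hδ h
    rw [omg_deriv p δ hp1 hδ hxpos] at hW
    have h1 : (2 * x) ^ (p - 2) ≤ (δ + x) ^ (p - 2) :=
      Real.rpow_le_rpow_of_nonpos (by linarith) (by linarith) (by linarith)
    have h2 : (2 * x : ℝ) ^ (p - 2) = 2 ^ (p - 2) * x ^ (p - 2) :=
      Real.mul_rpow (by norm_num) hxpos.le
    have h5 : x ^ (p - 2) * x = x ^ (p - 1) := by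
      rw [← Real.rpow_add_one hxpos.ne' (p - 2)]
      have e : p - 2 + 1 = p - 1 := by ring
      rw [e]
    have hkey1 : (2:ℝ) ^ (p - 2) * x ^ (p - 1) ≤ s := by
      calc (2:ℝ) ^ (p - 2) * x ^ (p - 1) = (2 * x) ^ (p - 2) * x := by rw [h2, ← h5]; ring
        _ ≤ (δ + x) ^ (p - 2) * x := mul_le_mul_of_nonneg_right h1 hxpos.le
        _ = s := hW
    have hkey : x ^ (p - 1) ≤ 2 * s := by
      have h8 := mul_le_mul_of_nonneg_right (two_rpow_ge p hp1)
        (Real.rpow_nonneg hxpos.le (p - 1))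
      nlinarith
    have h9 : x ≤ (2 * s) ^ (p - 1)⁻¹ := by
      have hxe : x = (x ^ (p - 1)) ^ (p - 1)⁻¹ :=
        (Real.rpow_rpow_inv hxpos.le (by linarith : p - 1 ≠ 0)).symm
      rw [hxe]
      exact Real.rpow_le_rpow (Real.rpow_nonneg hxpos.le _) hkey (inv_nonneg.mpr (by linarith))
    have h10 : (2 * s : ℝ) ^ (p - 1)⁻¹ = 2 ^ (p - 1)⁻¹ * s ^ (p - 1)⁻¹ :=
      Real.mul_rpow (by norm_num) hs
    rw [h10] at h9
    linarith

/-- For `p ∈ (1,2]`, `p' = p/(p−1)`, there is `C > 0` depending only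
on `p` such that for all `δ ≥ 0` the complementary function of `ω = ω_{p,δ}` satisfies
`ω*(t) ≤ C (δ^p + t^{p'})` for all `t ≥ 0`. -/
theorem stmt16 (p : ℝ) (hp : p ∈ Set.Ioc (1:ℝ) 2) :
    ∃ C : ℝ, 0 < C ∧
      ∀ δ : ℝ, 0 ≤ δ → ∀ t : ℝ, 0 ≤ t →
        conj (omg p δ) t ≤ C * (δ ^ p + t ^ (p / (p - 1))) := by
  obtain ⟨hp1, hp2⟩ := hp
  have hp1' : (0:ℝ) < p - 1 := by linarith
  set q := (p - 1)⁻¹ with hq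
  have hqpos : 0 < q := inv_pos.mpr hp1'
  have hq1 : q + 1 = p / (p - 1) := by
    rw [hq]; field_simp; ring
  refine ⟨1 + 2 ^ q, by positivity, ?_⟩
  intro δ hδ t ht
  have hconj : p.HolderConjugate (p / (p - 1)) := Real.HolderConjugate.conjExponent hp1
  have hp'1 : 1 < p / (p - 1) := hconj.symm.lt
  have hRHSa : (0:ℝ) ≤ δ ^ p := Real.rpow_nonneg hδ p
  have hRHSb : (0:ℝ) ≤ t ^ (p / (p - 1)) := Real.rpow_nonneg ht _
  by_cases hint : IntervalIntegrable
      (fun s => Function.invFunOn (deriv (omg p δ)) (Set.Ici 0) s) volume 0 t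
  · -- integrable case
    have hgle : ∀ s ∈ Set.Ioc (0:ℝ) t,
        Function.invFunOn (deriv (omg p δ)) (Set.Ici 0) s ≤ δ + 2 ^ q * s ^ q := by
      intro s hs
      have hex : ∃ a ∈ Set.Ici (0:ℝ), deriv (omg p δ) a = s := omg_surj p δ hp1 hp2 hδ hs.1
      have h1 : Function.invFunOn (deriv (omg p δ)) (Set.Ici 0) s ∈ Set.Ici (0:ℝ) :=
        Function.invFunOn_mem (by simpa using hex)
      have h2 : deriv (omg p δ) (Function.invFunOn (deriv (omg p δ)) (Set.Ici 0) s) = s :=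
        Function.invFunOn_eq (by simpa using hex)
      exact omg_inv_bound p δ hp1 hp2 hδ hs.1.le h1 h2
    have hcont_h : Continuous (fun s : ℝ => δ + 2 ^ q * s ^ q) :=
      continuous_const.add (continuous_const.mul (Real.continuous_rpow_const hqpos.le))
    have hgint : IntegrableOn (fun s => Function.invFunOn (deriv (omg p δ)) (Set.Ici 0) s)
        (Set.Ioc 0 t) volume :=
      (intervalIntegrable_iff_integrableOn_Ioc_of_le ht).mp hint
    have hhint : IntegrableOn (fun s : ℝ => δ + 2 ^ q * s ^ q) (Set.Ioc 0 t) volume :=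
      hcont_h.integrableOn_Ioc
    have hmono := setIntegral_mono_on hgint hhint measurableSet_Ioc hgle
    have hcalc : ∫ s in (0:ℝ)..t, (δ + 2 ^ q * s ^ q) =
        δ * t + 2 ^ q * (t ^ (q + 1) / (q + 1)) := by
      rw [intervalIntegral.integral_add (f := fun _ => δ) (g := fun s : ℝ => 2 ^ q * s ^ q) intervalIntegrable_const
        ((continuous_const.mul (Real.continuous_rpow_const hqpos.le)).intervalIntegrable _ _ :
          IntervalIntegrable (fun s : ℝ => 2 ^ q * s ^ q) volume 0 t)]
      rw [intervalIntegral.integral_const, intervalIntegral.integral_const_mul,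
        integral_rpow (Or.inl (by linarith : (-1:ℝ) < q))]
      rw [Real.zero_rpow (by positivity : q + 1 ≠ 0)]
      simp [smul_eq_mul]
      ring
    have hyoung : δ * t ≤ δ ^ p + t ^ (p / (p - 1)) := by
      have h := Real.young_inequality_of_nonneg hδ ht hconj
      have h1 : δ ^ p / p ≤ δ ^ p := div_le_self hRHSa (by linarith)
      have h2 : t ^ (p / (p - 1)) / (p / (p - 1)) ≤ t ^ (p / (p - 1)) :=
        div_le_self hRHSb hp'1.le
      linarith
    have hterm : 2 ^ q * (t ^ (q + 1) / (q + 1)) ≤ 2 ^ q * t ^ (p / (p - 1)) := by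
      rw [hq1]
      exact mul_le_mul_of_nonneg_left (div_le_self hRHSb (by rw [← hq1]; linarith))
        (by positivity)
    calc conj (omg p δ) t
        = ∫ s in Set.Ioc (0:ℝ) t,
            Function.invFunOn (deriv (omg p δ)) (Set.Ici 0) s := by
          rw [conj, intervalIntegral.integral_of_le ht]
      _ ≤ ∫ s in Set.Ioc (0:ℝ) t, (δ + 2 ^ q * s ^ q) := hmono
      _ = ∫ s in (0:ℝ)..t, (δ + 2 ^ q * s ^ q) := (intervalIntegral.integral_of_le ht).symm
      _ = δ * t + 2 ^ q * (t ^ (q + 1) / (q + 1)) := hcalc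
      _ ≤ (δ ^ p + t ^ (p / (p - 1))) + 2 ^ q * t ^ (p / (p - 1)) := by linarith
      _ ≤ (1 + 2 ^ q) * (δ ^ p + t ^ (p / (p - 1))) := by
          have h2q : (0:ℝ) ≤ 2 ^ q := by positivity
          nlinarith
  · rw [conj, intervalIntegral.integral_undef hint]
    positivity

end
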